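/- Let λ be a strong limit cardinal and κ an infinite cardinal with κ < λ and cf(κ) > cf(λ). Then there exists a strongly (λ,κ)-universal graph: a graph on λ with no κ-clique such that every graph on λ with no κ-clique embeds into it by a map preserving both edges and non-edges. -/

import Mathlib

open Cardinal Set

noncomputable section

namespace Stmt5Aux

variable {α : Type*}

/-- Restriction of a graph to a set: keep only edges inside the set. -/
def rX (G : SimpleGraph α) (s : Set α) : SimpleGraph α where
  Adj x y := G.Adj x y ∧ x ∈ s ∧ y ∈ s
  symm := ⟨fun _ _ ⟨h, hx, hy⟩ => ⟨h.symm, hy, hx⟩⟩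
  loopless := ⟨fun x ⟨h, _, _⟩ => G.loopless.irrefl x h⟩

lemma rX_adj {G : SimpleGraph α} {s : Set α} {x y : α} :
    (rX G s).Adj x y ↔ G.Adj x y ∧ x ∈ s ∧ y ∈ s := Iff.rfl

lemma rX_le (G : SimpleGraph α) (s : Set α) : rX G s ≤ G := fun _ _ h => h.1

lemma rX_rX (G : SimpleGraph α) {s t : Set α} (h : s ⊆ t) :
    rX (rX G t) s = rX G s := by
  ext x y
  constructor
  · rintro ⟨⟨h1, _, _⟩, hx, hy⟩; exact ⟨h1, hx, hy⟩
  · rintro ⟨h1, hx, hy⟩; exact ⟨⟨h1, h hx, h hy⟩, hx, hy⟩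

/-- No clique of size exactly `kappa`. -/
def NoCliq (kappa : Cardinal) (G : SimpleGraph α) : Prop :=
  ¬ ∃ s : Set α, G.IsClique s ∧ #s = kappa

lemma NoCliq.mono {kappa : Cardinal} {G H : SimpleGraph α} (hle : G ≤ H)
    (h : NoCliq kappa H) : NoCliq kappa G := by
  rintro ⟨s, hs, hcard⟩
  exact h ⟨s, hs.mono hle, hcard⟩

variable [LinearOrder α]

/-- Node condition: a graph supported below `c`, with no `kappa`-clique. -/
def Ok (kappa : Cardinal) (C : Set α) (c : ↥C) (G : SimpleGraph α) : Prop :=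
  (∀ x y : α, G.Adj x y → x ≤ (c : α) ∧ y ≤ (c : α)) ∧ NoCliq kappa G

/-- Vertex set of the universal graph: triples (level, graph, vertex). -/
def W (kappa : Cardinal) (C : Set α) : Type _ :=
  {p : ↥C × SimpleGraph α × α // Ok kappa C p.1 p.2.1}

variable {kappa : Cardinal} {C : Set α}

def lev (p : W kappa C) : ↥C := p.1.1
def gr (p : W kappa C) : SimpleGraph α := p.1.2.1
def vx (p : W kappa C) : α := p.1.2.2

/-- One-sided adjacency relation. -/
def ARel (p q : W kappa C) : Prop :=
  (lev p < lev q ∧ gr p = rX (gr q) (Iic (lev p : α)) ∧ (gr q).Adj (vx p) (vx q)) ∨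
  (lev p = lev q ∧ gr p = gr q ∧ (gr q).Adj (vx p) (vx q))

/-- Adjacency on `W`. -/
def Adj0 (p q : W kappa C) : Prop := ARel p q ∨ ARel q p

lemma adj0_symm {p q : W kappa C} (h : Adj0 p q) : Adj0 q p := Or.symm h

lemma Adj0.irrefl (p : W kappa C) : ¬ Adj0 p p := by
  rintro (h | h) <;>
  · rcases h with ⟨h, -, -⟩ | ⟨-, -, h⟩
    · exact lt_irrefl _ h
    · exact (gr p).loopless.irrefl _ h

lemma Adj0.same_level {p q : W kappa C} (hl : lev p = lev q) (h : Adj0 p q) :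
    gr p = gr q ∧ (gr p).Adj (vx p) (vx q) := by
  rcases h with (⟨hlt, -, -⟩ | ⟨-, hG, hadj⟩) | (⟨hlt, -, -⟩ | ⟨heq, hG, hadj⟩)
  · exact absurd hlt (by rw [hl]; exact lt_irrefl _)
  · exact ⟨hG, by rw [hG]; exact hadj⟩
  · exact absurd hlt (by rw [hl]; exact lt_irrefl _)
  · exact ⟨hG.symm, hadj.symm⟩

end Stmt5Aux

open Stmt5Aux

/-- If `λ` is a strong limit cardinal and `κ < λ` is infinite with
`cf(κ) > cf(λ)`, then there is a strongly `(λ,κ)`-universal graph: a graph on a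
vertex set of size `λ` with no clique of size `κ` into which every such graph
embeds by an injective map preserving both edges and non-edges. -/
theorem stmt5 (lam kappa : Cardinal) (hsl : lam.IsStrongLimit)
    (hkappa : ℵ₀ ≤ kappa) (hkl : kappa < lam)
    (hcf : lam.ord.cof < kappa.ord.cof) :
    ∃ X : SimpleGraph (Quotient.out lam),
      (¬ ∃ s : Set (Quotient.out lam), X.IsClique s ∧ #s = kappa) ∧
      ∀ Y : SimpleGraph (Quotient.out lam),
        (¬ ∃ s : Set (Quotient.out lam), Y.IsClique s ∧ #s = kappa) →
        ∃ f : Quotient.out lam → Quotient.out lam, Function.Injective f ∧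
          ∀ a b, Y.Adj a b ↔ X.Adj (f a) (f b) := by
  classical
  have hl0 : ℵ₀ ≤ lam := hkappa.trans hkl.le
  have hl0' : ℵ₀ < lam := hkappa.trans_lt hkl
  set V := Quotient.out lam with hV
  set α := lam.ord.ToType with hα
  haveI : NoMaxOrder α := Cardinal.noMaxOrder hl0
  haveI : IsWellOrder α (· < ·) := isWellOrder_lt
  have hmkα : #α = lam := by rw [hα, Cardinal.mk_toType, Cardinal.card_ord]
  -- A cofinal set of levels
  obtain ⟨C, hCub, hCcard'⟩ := Order.exists_cof_eq α
  have hCcard : #C = lam.ord.cof := hCcard'.trans (Ordinal.cof_toType _)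
  -- initial segments are small
  have hmu : ∀ c : α, #(Iic c) < lam := by
    intro c
    obtain ⟨d, hd⟩ := exists_gt c
    exact (mk_le_mk_of_subset fun x hx => lt_of_le_of_lt hx hd).trans_lt
      (Cardinal.mk_Iio_ord_toType d)
  -- counting Ok graphs at each level
  have hOk_card : ∀ c : ↥C, #{G : SimpleGraph α // Ok kappa C c G} ≤ lam := by
    intro c
    have hinj : Function.Injective fun G : {G : SimpleGraph α // Ok kappa C c G} =>
        ({z | G.1.Adj z.1 z.2} : Set (Iic (c : α) × Iic (c : α))) := by
      intro G H h
      apply Subtype.ext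
      ext x y
      constructor
      · intro hxy
        have hx := G.2.1 x y hxy
        exact (Set.ext_iff.mp h (⟨x, hx.1⟩, ⟨y, hx.2⟩)).mp hxy
      · intro hxy
        have hx := H.2.1 x y hxy
        exact (Set.ext_iff.mp h (⟨x, hx.1⟩, ⟨y, hx.2⟩)).mpr hxy
    have h1 : #{G : SimpleGraph α // Ok kappa C c G} ≤
        #(Set (Iic (c : α) × Iic (c : α))) := Cardinal.mk_le_of_injective hinj
    set μ := #(Iic (c : α)) with hμ
    have h2 : #(Set (Iic (c : α) × Iic (c : α))) = 2 ^ (μ * μ) := by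
      rw [Cardinal.mk_set, Cardinal.mul_def]
    have hν : max μ ℵ₀ < lam := max_lt (hmu _) hl0'
    have h3 : μ * μ ≤ max μ ℵ₀ := by
      calc μ * μ ≤ max μ ℵ₀ * max μ ℵ₀ :=
            mul_le_mul' (le_max_left _ _) (le_max_left _ _)
        _ = max μ ℵ₀ := Cardinal.mul_eq_self (le_max_right _ _)
    have h4 : (2 : Cardinal) ^ (μ * μ) ≤ 2 ^ max μ ℵ₀ :=
      Cardinal.power_le_power_left two_ne_zero h3
    exact h1.trans (h2.le.trans (h4.trans (hsl.two_power_lt hν).le))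
  -- counting all of W
  have hW_card : #(W kappa C) ≤ lam := by
    have hemb : Function.Injective
        (fun p : W kappa C =>
          (⟨lev p, (⟨gr p, p.2⟩, vx p)⟩ :
            Σ c : ↥C, ({G : SimpleGraph α // Ok kappa C c G} × α))) := by
      rintro ⟨⟨pc, pG, pv⟩, hp⟩ ⟨⟨qc, qG, qv⟩, hq⟩ h
      simp only [lev, gr, vx, Sigma.mk.inj_iff] at h
      obtain ⟨h1, h2⟩ := h
      subst h1
      have h2' := eq_of_heq h2
      apply Subtype.ext
      have h3 : pG = qG := congrArg (fun z => z.1.1) h2'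
      have h4 : pv = qv := congrArg (fun z => z.2) h2'
      subst h3; subst h4; rfl
    have h1 : #(W kappa C) ≤
        #(Σ c : ↥C, ({G : SimpleGraph α // Ok kappa C c G} × α)) :=
      Cardinal.mk_le_of_injective hemb
    rw [Cardinal.mk_sigma] at h1
    have h2 : (Cardinal.sum fun c : ↥C =>
        #({G : SimpleGraph α // Ok kappa C c G} × α)) ≤
        Cardinal.sum fun _ : ↥C => lam := by
      apply Cardinal.sum_le_sum
      intro c
      rw [Cardinal.mk_prod, Cardinal.lift_id, Cardinal.lift_id, hmkα]
      calc #{G : SimpleGraph α // Ok kappa C c G} * lam ≤ lam * lam :=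
            mul_le_mul_left (hOk_card c) lam
        _ = lam := Cardinal.mul_eq_self hl0
    rw [Cardinal.sum_const'] at h2
    have h3 : #(↥C) * lam ≤ lam * lam := by
      apply mul_le_mul_left
      rw [hCcard]
      exact (Ordinal.cof_ord_le lam)
    exact h1.trans (h2.trans (h3.trans_eq (Cardinal.mul_eq_self hl0)))
  -- embed W into V
  have hWV : #(W kappa C) ≤ #V := by rw [hV, Cardinal.mk_out]; exact hW_card
  obtain ⟨emb⟩ := (Cardinal.le_def _ _).mp hWV
  -- the universal graph
  refine ⟨{ Adj := fun x y => ∃ p q : W kappa C, Adj0 p q ∧ emb p = x ∧ emb q = y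
            symm := ⟨by rintro x y ⟨p, q, h, hp, hq⟩; exact ⟨q, p, adj0_symm h, hq, hp⟩⟩
            loopless := ⟨by
              rintro x ⟨p, q, h, hp, hq⟩
              cases emb.injective (hp.trans hq.symm)
              exact Adj0.irrefl p h⟩ }, ?_, ?_⟩
  · -- no kappa-clique
    rintro ⟨s, hs, hcard⟩
    have h2s : (1 : Cardinal) < #s := by
      rw [hcard]; exact one_lt_aleph0.trans_le hkappa
    haveI : Nontrivial s := Cardinal.one_lt_iff_nontrivial.mp h2s
    -- every element of s is in the range of emb, and t is an Adj0-clique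
    set t : Set (W kappa C) := {p | emb p ∈ s} with ht
    have htc : ∀ p q : W kappa C, p ∈ t → q ∈ t → p ≠ q → Adj0 p q := by
      intro p q hp hq hpq
      have : emb p ≠ emb q := fun h => hpq (emb.injective h)
      obtain ⟨p', q', h', hp', hq'⟩ := hs hp hq this
      cases emb.injective hp'
      cases emb.injective hq'
      exact h'
    have hts : #t ≤ kappa :=
      calc #t ≤ #s := Cardinal.mk_le_of_injective (f := fun p : t => (⟨emb p, p.2⟩ : s))
            (fun p q h => Subtype.ext (emb.injective (congrArg Subtype.val h)))
        _ = kappa := hcard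
    have hst : kappa ≤ #t := by
      have hex : ∀ x : s, ∃ p : W kappa C, emb p = x := by
        intro x
        obtain ⟨y, hy⟩ := exists_ne x
        have hadj := hs x.2 y.2 (fun h => hy (Subtype.ext h.symm))
        obtain ⟨p, q, _, hp, _⟩ := hadj
        exact ⟨p, hp⟩
      choose g hg using hex
      have hmem : ∀ x : s, g x ∈ t := by
        intro x
        show emb (g x) ∈ s
        rw [hg]
        exact x.2
      calc kappa = #s := hcard.symm
        _ ≤ #t := by
            refine Cardinal.mk_le_of_injective
              (f := fun x : s => (⟨g x, hmem x⟩ : t)) ?_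
            intro x y h
            have h' : g x = g y := congrArg Subtype.val h
            have := (hg x).symm.trans (congrArg emb h' |>.trans (hg y))
            exact Subtype.ext this
    -- fibers by level
    set fib : ↥C → Set (W kappa C) := fun c => {p | p ∈ t ∧ lev p = c} with hfib
    have hfib_big : ∃ c : ↥C, kappa ≤ #(fib c) := by
      by_contra hno
      push_neg at hno
      have hu : t ⊆ ⋃ c : ↥C, fib c := by
        intro p hp; exact Set.mem_iUnion.mpr ⟨lev p, hp, rfl⟩
      have h1 : #t ≤ Cardinal.sum fun c : ↥C => #(fib c) :=
        (mk_le_mk_of_subset hu).trans Cardinal.mk_iUnion_le_sum_mk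
      have h2 : Cardinal.sum (fun c : ↥C => #(fib c)) ≤
          #(↥C) * ⨆ c : ↥C, #(fib c) := Cardinal.sum_le_mk_mul_iSup _
      have hCk : #(↥C) < kappa := by
        rw [hCcard]; exact hcf.trans_le (Ordinal.cof_ord_le kappa)
      have h3 : (⨆ c : ↥C, #(fib c)) < kappa :=
        Cardinal.iSup_lt_of_lt_cof_ord (by rw [hCcard]; exact hcf) hno
      have : #t < kappa :=
        (h1.trans h2).trans_lt (Cardinal.mul_lt_of_lt hkappa hCk h3)
      exact absurd hst (not_le.mpr this)
    obtain ⟨c, hc⟩ := hfib_big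
    have hcpos : (0 : Cardinal) < #(fib c) :=
      (aleph0_pos.trans_le hkappa).trans_le hc
    have hfibne : Nonempty (fib c) := by
      rw [← Cardinal.mk_ne_zero_iff]; exact hcpos.ne'
    obtain ⟨p0, hp0⟩ := hfibne
    -- all members of the fiber carry the same graph `G`
    set G : SimpleGraph α := gr p0 with hG
    have hsame : ∀ p : W kappa C, p ∈ fib c → gr p = G := by
      intro p hp
      by_cases hpp : p = p0
      · rw [hpp]
      · have hadj := htc p p0 hp.1 hp0.1 hpp
        exact (hadj.same_level (hp.2.trans hp0.2.symm)).1
    -- the vertex map is injective on the fiber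
    have hinjOn : Set.InjOn (fun p : W kappa C => vx p) (fib c) := by
      intro p hp q hq h
      by_contra hpq
      have hadj := htc p q hp.1 hq.1 hpq
      have := (hadj.same_level (hp.2.trans hq.2.symm)).2
      rw [show vx p = vx q from h] at this
      exact (gr p).loopless.irrefl _ this
    -- producing a kappa-clique in G
    have hclique : G.IsClique ((fun p : W kappa C => vx p) '' fib c) := by
      rintro x ⟨p, hp, rfl⟩ y ⟨q, hq, rfl⟩ hxy
      have hpq : p ≠ q := fun h => hxy (by rw [h])
      have hadj := htc p q hp.1 hq.1 hpq
      have h2 := (hadj.same_level (hp.2.trans hq.2.symm)).2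
      rwa [hsame p hp] at h2
    have hGcard : #((fun p : W kappa C => vx p) '' fib c) = kappa := by
      rw [Cardinal.mk_image_eq_of_injOn _ _ hinjOn]
      exact le_antisymm (le_trans (mk_le_mk_of_subset (fun p hp => hp.1)) hts) hc
    exact p0.2.2 ⟨_, hclique, hGcard⟩
  · -- universality
    intro Y hY
    -- bijection between V and α
    have heq : Nonempty (V ≃ α) := by
      rw [← Cardinal.eq, hV, Cardinal.mk_out, hmkα]
    obtain ⟨e⟩ := heq
    -- transfer Y to α
    set Y' : SimpleGraph α :=
      { Adj := fun a b => Y.Adj (e.symm a) (e.symm b)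
        symm := ⟨fun a b h => h.symm⟩
        loopless := ⟨fun a h => Y.loopless.irrefl _ h⟩ } with hY'
    have hY'nc : NoCliq kappa Y' := by
      rintro ⟨s, hs, hcard⟩
      refine hY ⟨e.symm '' s, ?_, ?_⟩
      · rintro x ⟨a, ha, rfl⟩ y ⟨b, hb, rfl⟩ hxy
        have hab : a ≠ b := fun h => hxy (by rw [h])
        exact hs ha hb hab
      · rw [Cardinal.mk_image_eq_of_injOn _ _ (e.symm.injective.injOn)]
        exact hcard
    -- level function
    have hl : ∀ x : α, ∃ c : ↥C, x ≤ (c : α) := by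
      intro x
      obtain ⟨b, hb, hba⟩ := hCub x
      exact ⟨⟨b, hb⟩, hba⟩
    choose ℓ hℓ using hl
    -- node map
    have hok : ∀ v : α, Ok kappa C (ℓ v) (rX Y' (Iic (ℓ v : α))) := by
      intro v
      constructor
      · intro x y hxy
        exact ⟨hxy.2.1, hxy.2.2⟩
      · exact hY'nc.mono (rX_le _ _)
    set node : α → W kappa C := fun v => ⟨(ℓ v, rX Y' (Iic (ℓ v : α)), v), hok v⟩
      with hnode
    have hlev : ∀ v, lev (node v) = ℓ v := fun _ => rfl
    have hgr : ∀ v, gr (node v) = rX Y' (Iic (ℓ v : α)) := fun _ => rfl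
    have hvx : ∀ v, vx (node v) = v := fun _ => rfl
    refine ⟨fun a => emb (node (e a)), ?_, ?_⟩
    · intro a b h
      have h1 := emb.injective h
      have h2 := congrArg (fun p : W kappa C => vx p) h1
      simp only [hvx] at h2
      exact e.injective h2
    · intro a b
      have hYab : Y'.Adj (e a) (e b) ↔ Y.Adj a b := by
        simp [hY']
      constructor
      · intro hadj
        refine ⟨node (e a), node (e b), ?_, rfl, rfl⟩
        rcases lt_trichotomy (ℓ (e a)) (ℓ (e b)) with hlt | heq | hgt
        · left; left
          refine ⟨hlt, ?_, ?_⟩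
          · rw [hgr, hgr, hlev]
            exact (rX_rX _ (Iic_subset_Iic.mpr
              (le_of_lt (Subtype.coe_lt_coe.mpr hlt)))).symm
          · rw [hgr, hvx, hvx]
            exact ⟨hYab.mpr hadj,
              (hℓ (e a)).trans (le_of_lt (Subtype.coe_lt_coe.mpr hlt)), hℓ (e b)⟩
        · left; right
          refine ⟨heq, ?_, ?_⟩
          · rw [hgr, hgr, heq]
          · rw [hgr, hvx, hvx]
            refine ⟨hYab.mpr hadj, ?_, hℓ (e b)⟩
            have h5 := hℓ (e a)
            rwa [heq] at h5
        · right; left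
          refine ⟨hgt, ?_, ?_⟩
          · rw [hgr, hgr, hlev]
            exact (rX_rX _ (Iic_subset_Iic.mpr
              (le_of_lt (Subtype.coe_lt_coe.mpr hgt)))).symm
          · rw [hgr, hvx, hvx]
            exact ⟨(hYab.mpr hadj).symm,
              (hℓ (e b)).trans (le_of_lt (Subtype.coe_lt_coe.mpr hgt)), hℓ (e a)⟩
      · rintro ⟨p, q, hadj, hp, hq⟩
        have hpa : p = node (e a) := emb.injective hp
        have hqb : q = node (e b) := emb.injective hq
        subst hpa; subst hqb
        rw [← hYab]
        rcases hadj with (⟨-, -, h⟩ | ⟨-, -, h⟩) | (⟨-, -, h⟩ | ⟨-, -, h⟩) <;>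
          rw [hgr] at h
        · exact h.1
        · exact h.1
        · exact h.1.symm
        · exact h.1.symm

end
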